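/- If K is a linearly ordered field and G is a linearly ordered group, then the group algebra K[G] has no zero divisors. -/

import Mathlib

theorem group_algebra_no_zero_divisors (K G : Type*) [Field K] [LinearOrder K] [IsStrictOrderedRing K] [Group G]
    [LinearOrder G] (hG : ∀ a b x y : G, x < y → a * x * b < a * y * b) :
    ∀ f g : MonoidAlgebra K G, f ≠ 0 → g ≠ 0 → f * g ≠ 0 := by
  haveI : MulLeftStrictMono G := ⟨fun a x y h => by simpa using hG a 1 x y h⟩
  intro f g hf hg
  exact mul_ne_zero hf hg
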